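/- For N ≥ 1 let λ_i = i/(2N+1−i), t = 1/(2Nh+1) with 0 < h ≤ 1, q = (λ₁, λ₂−λ₁, …, λ_N−λ_{N−1}, 1−λ_N)ᵀ ∈ ℝ^{N+1}, and S = [[(1−h)S₀ + hS₁, q],[qᵀ, t]] with S₀, S₁ the matrices defined in the two earlier statements. Then the vector u = (1,1,…,1,−(2Nh+1))ᵀ ∈ ℝ^{N+2} satisfies S u = 0. -/

import Mathlib

open Matrix
open Finset

/-- λ_i = i/(2N+1−i). -/
noncomputable def lamS (N i : ℕ) : ℝ := (i : ℝ) / (2 * N + 1 - i)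

/-- The tridiagonal matrix S₀ with diagonal (2λ₁,…,2λ_N,1) and off-diagonals −λ_i. -/
noncomputable def S0mat (N : ℕ) : Matrix (Fin (N + 1)) (Fin (N + 1)) ℝ :=
  Matrix.of fun i j =>
    if i = j then (if (i : ℕ) = N then 1 else 2 * lamS N (i + 1))
    else if (i : ℕ) + 1 = (j : ℕ) then - lamS N (i + 1)
    else if (j : ℕ) + 1 = (i : ℕ) then - lamS N (j + 1)
    else 0

/-- The matrix S₁. -/
noncomputable def S1mat (N : ℕ) : Matrix (Fin (N + 1)) (Fin (N + 1)) ℝ :=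
  Matrix.of fun i j =>
    if (i : ℕ) = N ∧ (j : ℕ) = N then 1
    else if (i : ℕ) = N ∨ (j : ℕ) = N then 1 - lamS N N
    else if i = j then 2 * lamS N (i + 1)
    else lamS N (max (i : ℕ) (j : ℕ) + 1) - lamS N (max (i : ℕ) (j : ℕ))

/-- q = (λ₁, λ₂−λ₁, …, λ_N−λ_{N−1}, 1−λ_N). -/
noncomputable def qvec (N : ℕ) : Fin (N + 1) → ℝ := fun i =>
  if (i : ℕ) = N then 1 - lamS N N else lamS N (i + 1) - lamS N i

lemma lamS_zero (N : ℕ) : lamS N 0 = 0 := by simp [lamS]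

lemma sum_qvec (N : ℕ) (hN : 1 ≤ N) : ∑ j : Fin (N+1), qvec N j = 1 := by
  have h0 : ∑ j : Fin (N+1), qvec N j = ∑ k ∈ range (N+1),
      (if k = N then 1 - lamS N N else lamS N (k+1) - lamS N k) :=
    Fin.sum_univ_eq_sum_range (fun k => if k = N then 1 - lamS N N else lamS N (k+1) - lamS N k) (N+1)
  rw [h0, Finset.sum_range_succ]
  have h2 : ∑ k ∈ range N, (if k = N then 1 - lamS N N else lamS N (k+1) - lamS N k)
      = ∑ k ∈ range N, (lamS N (k+1) - lamS N k) := by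
    apply Finset.sum_congr rfl
    intro k hk
    rw [if_neg (Nat.ne_of_lt (Finset.mem_range.mp hk))]
  rw [h2, Finset.sum_range_sub, lamS_zero, if_pos rfl]
  ring

lemma sum_S0_row (N : ℕ) (hN : 1 ≤ N) (i : Fin (N+1)) :
    ∑ j, S0mat N i j = qvec N i := by
  have hm : (i : ℕ) ≤ N := Nat.lt_succ_iff.mp i.isLt
  have h1 : ∑ j, S0mat N i j = ∑ k ∈ range (N+1),
      ((if (i:ℕ) = k then (if (i:ℕ) = N then (1:ℝ) else 2*lamS N ((i:ℕ)+1)) else 0) +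
       ((if (i:ℕ)+1 = k then -lamS N ((i:ℕ)+1) else 0) +
        (if k+1 = (i:ℕ) then -lamS N (k+1) else 0))) := by
    rw [← Fin.sum_univ_eq_sum_range]
    apply Finset.sum_congr rfl
    intro j _
    simp only [S0mat, Matrix.of_apply, Fin.ext_iff]
    by_cases h1 : (i:ℕ) = (j:ℕ) <;> by_cases h2 : (i:ℕ)+1 = (j:ℕ) <;>
      by_cases h3 : (j:ℕ)+1 = (i:ℕ) <;> simp [h1, h2, h3] <;> omega
  rw [h1, Finset.sum_add_distrib, Finset.sum_add_distrib, Finset.sum_ite_eq,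
    Finset.sum_ite_eq]
  have h3 : ∑ k ∈ range (N+1), (if k+1 = (i:ℕ) then -lamS N (k+1) else 0)
      = -lamS N (i:ℕ) := by
    rcases hmc : (i : ℕ) with _ | m'
    · simp [lamS_zero]
    · have hc : ∀ k : ℕ, (k + 1 = m' + 1) ↔ (m' = k) := fun k => by omega
      simp only [hc]
      rw [Finset.sum_ite_eq]
      rw [if_pos (Finset.mem_range.mpr (by omega))]
  rw [h3]
  simp only [Finset.mem_range]
  by_cases hiN : (i:ℕ) = N
  · simp only [qvec, hiN, if_pos rfl, Nat.lt_succ_self, if_true, lt_irrefl, if_false,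
      Nat.add_lt_add_iff_right]
    ring
  · have hlt : (i:ℕ) < N := lt_of_le_of_ne hm hiN
    rw [if_pos i.isLt, if_pos (show (i:ℕ)+1 < N+1 by omega), if_neg hiN]
    simp only [qvec, hiN, if_false]
    ring

lemma sum_S1_aux (N m : ℕ) (hN : 1 ≤ N) (hm : m ≤ N) :
    ∑ k ∈ range (N+1),
      (if m = N ∧ k = N then (1:ℝ)
       else if m = N ∨ k = N then 1 - lamS N N
       else if m = k then 2 * lamS N (m+1)
       else lamS N (max m k + 1) - lamS N (max m k))
    = (2*N+1) * (if m = N then 1 - lamS N N else lamS N (m+1) - lamS N m) := by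
  have hdN : (2*(N:ℝ)+1 - N) ≠ 0 := by
    have : (2*(N:ℝ)+1 - N) = N + 1 := by ring
    rw [this]; positivity
  by_cases hiN : m = N
  · rw [Finset.sum_range_succ]
    have h2 : ∑ k ∈ range N, (if m = N ∧ k = N then (1:ℝ)
        else if m = N ∨ k = N then 1 - lamS N N
        else if m = k then 2 * lamS N (m+1)
        else lamS N (max m k + 1) - lamS N (max m k))
        = ∑ k ∈ range N, (1 - lamS N N) := by
      apply Finset.sum_congr rfl
      intro k hk
      have hkN : k ≠ N := by have := Finset.mem_range.mp hk; omega
      rw [if_neg (by tauto), if_pos (Or.inl hiN)]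
    rw [h2, Finset.sum_const, if_pos ⟨hiN, rfl⟩, if_pos hiN]
    simp only [nsmul_eq_mul, lamS, Finset.card_range]
    push_cast
    rw [show (2*(N:ℝ)+1-N) = N+1 by ring]
    field_simp
    ring
  · have hlt : m < N := lt_of_le_of_ne hm hiN
    rw [Finset.sum_range_succ]
    have hGN : (if m = N ∧ N = N then (1:ℝ)
        else if m = N ∨ N = N then 1 - lamS N N
        else if m = N then 2 * lamS N (m+1)
        else lamS N (max m N + 1) - lamS N (max m N)) = 1 - lamS N N := by
      rw [if_neg (by tauto), if_pos (by tauto)]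
    rw [hGN]
    have hsplit : ∑ k ∈ range N, (if m = N ∧ k = N then (1:ℝ)
        else if m = N ∨ k = N then 1 - lamS N N
        else if m = k then 2 * lamS N (m+1)
        else lamS N (max m k + 1) - lamS N (max m k))
        = ∑ k ∈ Finset.Ico 0 m, (lamS N (m+1) - lamS N m)
          + (2 * lamS N (m+1) + ∑ k ∈ Finset.Ico (m+1) N, (lamS N (k+1) - lamS N k)) := by
      rw [Finset.range_eq_Ico, ← Finset.sum_Ico_consecutive _ (Nat.zero_le m) (le_of_lt hlt)]
      congr 1
      · apply Finset.sum_congr rfl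
        intro k hk
        have hk' : k < m := (Finset.mem_Ico.mp hk).2
        rw [if_neg (by omega), if_neg (by omega), if_neg (by omega),
          Nat.max_eq_left (le_of_lt hk')]
      · rw [Finset.sum_eq_sum_Ico_succ_bot hlt]
        congr 1
        · rw [if_neg (by omega), if_neg (by omega), if_pos rfl]
        · apply Finset.sum_congr rfl
          intro k hk
          have hk' : m < k ∧ k < N := by
            have := Finset.mem_Ico.mp hk; omega
          rw [if_neg (by omega), if_neg (by omega), if_neg (by omega),
            Nat.max_eq_right (le_of_lt hk'.1)]
    rw [hsplit]
    have htel : ∑ k ∈ Finset.Ico (m+1) N, (lamS N (k+1) - lamS N k)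
        = lamS N N - lamS N (m+1) := by
      rw [Finset.sum_Ico_eq_sub _ hlt, Finset.sum_range_sub, Finset.sum_range_sub]
      ring
    rw [htel, Finset.sum_const, Nat.card_Ico, Nat.sub_zero, nsmul_eq_mul, if_neg hiN]
    simp only [lamS]
    have hc1 : (m:ℝ) < N := by exact_mod_cast hlt
    have hc0 : (0:ℝ) ≤ m := by positivity
    have hd1 : (2*(N:ℝ)+1 - (m:ℝ)) ≠ 0 := by nlinarith
    have hd2 : (2*(N:ℝ)+1 - ((m:ℝ)+1)) ≠ 0 := by nlinarith
    have hd2' : (2*(N:ℝ) - (m:ℝ)) ≠ 0 := by nlinarith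
    push_cast
    field_simp
    ring

lemma sum_S1_row (N : ℕ) (hN : 1 ≤ N) (i : Fin (N+1)) :
    ∑ j, S1mat N i j = (2*N+1) * qvec N i := by
  have hm : (i : ℕ) ≤ N := Nat.lt_succ_iff.mp i.isLt
  have h1 : ∑ j, S1mat N i j = ∑ k ∈ range (N+1),
      (if (i:ℕ) = N ∧ k = N then (1:ℝ)
       else if (i:ℕ) = N ∨ k = N then 1 - lamS N N
       else if (i:ℕ) = k then 2 * lamS N ((i:ℕ)+1)
       else lamS N (max (i:ℕ) k + 1) - lamS N (max (i:ℕ) k)) := by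
    rw [← Fin.sum_univ_eq_sum_range]
    apply Finset.sum_congr rfl
    intro j _
    simp only [S1mat, Matrix.of_apply, Fin.ext_iff]
  rw [h1, sum_S1_aux N (i:ℕ) hN hm]
  rfl

theorem S_kernel_vector (N : ℕ) (hN : 1 ≤ N) (h : ℝ) (hh0 : 0 < h) (hh1 : h ≤ 1) :
    (Matrix.fromBlocks ((1 - h) • S0mat N + h • S1mat N)
        (Matrix.of fun i (_ : Fin 1) => qvec N i)
        (Matrix.of fun (_ : Fin 1) j => qvec N j)
        (Matrix.of fun (_ : Fin 1) (_ : Fin 1) => 1 / (2 * N * h + 1))).mulVec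
      (Sum.elim (fun _ => 1) fun _ => -(2 * N * h + 1)) = 0 := by
  classical
  have hden : (2 * (N:ℝ) * h + 1) ≠ 0 := by positivity
  rw [Matrix.fromBlocks_mulVec]
  funext x
  cases x with
  | inl i =>
    simp only [Sum.elim_inl, Sum.elim_inr, Pi.add_apply, Matrix.mulVec, dotProduct,
      Matrix.add_apply, Matrix.smul_apply, Matrix.of_apply, Function.comp_apply,
      smul_eq_mul, mul_one, Pi.zero_apply, Fin.sum_univ_one]
    rw [Finset.sum_add_distrib, ← Finset.mul_sum, ← Finset.mul_sum,
      sum_S0_row N hN i, sum_S1_row N hN i]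
    push_cast
    ring
  | inr i =>
    simp only [Sum.elim_inl, Sum.elim_inr, Pi.add_apply, Matrix.mulVec, dotProduct,
      Matrix.of_apply, Function.comp_apply, mul_one, Pi.zero_apply, Fin.sum_univ_one]
    rw [sum_qvec N hN]
    field_simp
    ring
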